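/- Suppose C ⊆ Q^m has minimum distance δ ≥ 3 and {J_1,...,J_ℓ} is a partition of {1,...,m}. Fix i, let ν̄ be a vertex of Q^{J_i} with d(ν̄, π_{J_i}(C)) = 2, and let α ∈ C attain this distance, i.e., d(ν̄, π_{J_i}(α)) = 2. Define ν̂ ∈ Q^m by ν̂_u = ν̄_u for u ∈ J_i and ν̂_u = α_u otherwise. Then d(ν̂, C) = 2. -/

import Mathlib

lemma restr_le {m q : ℕ} (s : Finset (Fin m)) (x y : Fin m → Fin q) :
    hammingDist (fun j : {u // u ∈ s} => x j) (fun j : {u // u ∈ s} => y j)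
      ≤ hammingDist x y := by
  classical
  simp only [hammingDist]
  apply Finset.card_le_card_of_injOn (fun j => j.1)
  · intro j hj
    simp only [Finset.mem_coe, Finset.mem_filter, Finset.mem_univ, true_and] at hj ⊢
    exact hj
  · intro a _ b _ h
    exact Subtype.ext h

theorem stmt_6 (m q ℓ : ℕ) (C : Set (Fin m → Fin q))
    (J : Fin ℓ → Finset (Fin m)) (hpart : ∀ u : Fin m, ∃! i : Fin ℓ, u ∈ J i)
    (hδ : ∀ a ∈ C, ∀ b ∈ C, a ≠ b → 3 ≤ hammingDist a b)
    (i : Fin ℓ) (nubar : {u // u ∈ J i} → Fin q)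
    (hd2 : sInf {n | ∃ c ∈ C, hammingDist nubar (fun j : {u // u ∈ J i} => c j) = n} = 2)
    (α : Fin m → Fin q) (hα : α ∈ C)
    (hαd : hammingDist nubar (fun j : {u // u ∈ J i} => α j) = 2)
    (nuhat : Fin m → Fin q)
    (hnuhat : ∀ u : Fin m, nuhat u = if hu : u ∈ J i then nubar ⟨u, hu⟩ else α u) :
    sInf {n | ∃ c ∈ C, hammingDist nuhat c = n} = 2 := by
  classical
  -- nubar is the restriction of nuhat to J i
  have hrestr : (fun j : {u // u ∈ J i} => nuhat j) = nubar := by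
    funext j
    rw [hnuhat]
    simp [j.2]
  -- key: hammingDist nuhat α = 2
  have hkey : hammingDist nuhat α = 2 := by
    rw [← hαd]
    simp only [hammingDist]
    apply Finset.card_bij (fun (j : Fin m) hj => (⟨j, by
      simp only [Finset.mem_filter, Finset.mem_univ, true_and] at hj
      by_contra hji
      rw [hnuhat j, dif_neg hji] at hj
      exact hj rfl⟩ : {u // u ∈ J i}))
    · intro j hj
      simp only [Finset.mem_filter, Finset.mem_univ, true_and] at hj ⊢
      intro h
      apply hj
      rw [hnuhat j]
      rw [dif_pos]
      exact h
    · intro a ha b hb h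
      exact congrArg Subtype.val h
    · intro b hb
      simp only [Finset.mem_filter, Finset.mem_univ, true_and] at hb
      refine ⟨b.1, ?_, rfl⟩
      simp only [Finset.mem_filter, Finset.mem_univ, true_and]
      rw [hnuhat b.1, dif_pos b.2]
      exact hb
  -- lower bound: every element of the set is ≥ 2
  have hlb : ∀ n ∈ {n | ∃ c ∈ C, hammingDist nuhat c = n}, 2 ≤ n := by
    rintro n ⟨c, hc, rfl⟩
    have h1 : hammingDist nubar (fun j : {u // u ∈ J i} => c j) ≤ hammingDist nuhat c := by
      rw [← hrestr]
      exact restr_le (J i) nuhat c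
    have h2 : 2 ≤ hammingDist nubar (fun j : {u // u ∈ J i} => c j) := by
      rw [← hd2]
      exact Nat.sInf_le ⟨c, hc, rfl⟩
    exact le_trans h2 h1
  have hmem : 2 ∈ {n | ∃ c ∈ C, hammingDist nuhat c = n} := ⟨α, hα, hkey⟩
  refine le_antisymm (Nat.sInf_le hmem) ?_
  apply le_csInf ⟨2, hmem⟩
  exact hlb
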